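/- Let $A$ be a commutative $\mathbb{Q}$-algebra and $A \subseteq B$ a ring extension such that there exists $b \in B$ with $B = A[b]$, $b^2 \in A$, and $b^3 \in A$ (an elementary extension). Then $\operatorname{Spec} B \to \operatorname{Spec} A$ is a universal homeomorphism. -/

import Mathlib

set_option synthInstance.maxHeartbeats 1000000
set_option maxHeartbeats 1000000

open AlgebraicGeometry CategoryTheory TensorProduct

/-- A morphism of schemes is a universal homeomorphism if every base change of it is a
homeomorphism on underlying topological spaces. -/
def IsUniversalHomeomorphism : MorphismProperty Scheme :=
  MorphismProperty.universally (topologically @IsHomeomorph)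

/-- The underlying map of an integral morphism of schemes is a closed map. -/
lemma isClosedMap_base_of_isIntegralHom {X Y : Scheme} (f : X ⟶ Y) [hf : IsIntegralHom f] :
    IsClosedMap f.base := by
  have H : topologically @IsClosedMap f := by
    rw [IsZariskiLocalAtTarget.iff_of_openCover (P := topologically @IsClosedMap) Y.affineCover]
    intro i
    have hi : IsIntegralHom (Y.affineCover.pullbackHom f i) :=
      (@IsZariskiLocalAtTarget.iff_of_openCover _
        (@HasAffineProperty.instIsZariskiLocalAtTarget _ _ IsIntegralHom.hasAffineProperty) _ _ _ Y.affineCover).mp hf i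
    set g := Y.affineCover.pullbackHom f i with hg
    obtain ⟨h1, h2⟩ := (@HasAffineProperty.iff_of_isAffine _ _ IsIntegralHom.hasAffineProperty).mp hi
    rw [MorphismProperty.arrow_mk_iso_iff (topologically @IsClosedMap)
      (arrowIsoSpecΓOfIsAffine g)]
    exact PrimeSpectrum.isClosedMap_comap_of_isIntegral _ h2
  exact H

/-- An integral, surjective, universally injective morphism of schemes is a universal
homeomorphism. -/
lemma isUniversalHomeomorphism_of_isIntegralHom {X Y : Scheme} (f : X ⟶ Y)
    [IsIntegralHom f] [Surjective f] [UniversallyInjective f] :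
    IsUniversalHomeomorphism f := by
  intro X' Y' i₁ i₂ f' h
  haveI : IsIntegralHom f' := MorphismProperty.of_isPullback h.flip ‹_›
  haveI : Surjective f' := MorphismProperty.of_isPullback h.flip ‹_›
  haveI : UniversallyInjective f' := MorphismProperty.of_isPullback h.flip ‹_›
  show IsHomeomorph f'.base
  rw [isHomeomorph_iff_continuous_isClosedMap_bijective]
  exact ⟨f'.continuous, isClosedMap_base_of_isIntegralHom f', f'.injective, f'.surjective⟩

/-- Every element of the kernel of the multiplication map `B ⊗[A] B → B` is nilpotent,
for an elementary extension `A ⊆ B`. -/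
lemma aux_nilpotent_ker {B : Type} [CommRing B] [Algebra ℚ B] (A : Subalgebra ℚ B)
    (b : B) (hb2 : b ^ 2 ∈ A) (hb3 : b ^ 3 ∈ A)
    (hgen : ∀ x : B, x ∈ Algebra.adjoin ℚ (insert b (A : Set B)))
    (x : B ⊗[↥A] B) (hx : Algebra.TensorProduct.lmul' ↥A x = 0) :
    IsNilpotent x := by
  set d : B ⊗[↥A] B := b ⊗ₜ[↥A] 1 - 1 ⊗ₜ[↥A] b with hd
  have move2 : ∀ y z : B, (b ^ 2 * y) ⊗ₜ[↥A] z = y ⊗ₜ[↥A] (b ^ 2 * z) := by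
    intro y z
    have h1 : (⟨b ^ 2, hb2⟩ : ↥A) • y = b ^ 2 * y := by rw [Algebra.smul_def]; rfl
    have h2 : (⟨b ^ 2, hb2⟩ : ↥A) • z = b ^ 2 * z := by rw [Algebra.smul_def]; rfl
    rw [← h1, ← h2, TensorProduct.smul_tmul]
  have move3 : ∀ y z : B, (b ^ 3 * y) ⊗ₜ[↥A] z = y ⊗ₜ[↥A] (b ^ 3 * z) := by
    intro y z
    have h1 : (⟨b ^ 3, hb3⟩ : ↥A) • y = b ^ 3 * y := by rw [Algebra.smul_def]; rfl
    have h2 : (⟨b ^ 3, hb3⟩ : ↥A) • z = b ^ 3 * z := by rw [Algebra.smul_def]; rfl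
    rw [← h1, ← h2, TensorProduct.smul_tmul]
  have hd3 : d ^ 3 = 0 := by
    have expand : d ^ 3 =
        (b ⊗ₜ[↥A] 1) * (b ⊗ₜ[↥A] 1) * (b ⊗ₜ[↥A] 1)
        - 3 * ((b ⊗ₜ[↥A] 1) * (b ⊗ₜ[↥A] 1) * (1 ⊗ₜ[↥A] b))
        + 3 * ((b ⊗ₜ[↥A] 1) * (1 ⊗ₜ[↥A] b) * (1 ⊗ₜ[↥A] b))
        - (1 ⊗ₜ[↥A] b) * (1 ⊗ₜ[↥A] b) * (1 ⊗ₜ[↥A] b) := by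
      rw [hd]; ring
    have e1 : (b ⊗ₜ[↥A] (1:B)) * (b ⊗ₜ[↥A] 1) * (b ⊗ₜ[↥A] 1) = (1:B) ⊗ₜ[↥A] (b ^ 3) := by
      simp only [Algebra.TensorProduct.tmul_mul_tmul, mul_one, one_mul]
      rw [show b * b * b = b ^ 3 * 1 by ring, move3, mul_one]
    have e2 : (b ⊗ₜ[↥A] (1:B)) * (b ⊗ₜ[↥A] 1) * ((1:B) ⊗ₜ[↥A] b) = (1:B) ⊗ₜ[↥A] (b ^ 3) := by
      simp only [Algebra.TensorProduct.tmul_mul_tmul, mul_one, one_mul]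
      rw [show b * b = b ^ 2 * 1 by ring, move2, show b ^ 2 * b = b ^ 3 by ring]
    have e3 : (b ⊗ₜ[↥A] (1:B)) * ((1:B) ⊗ₜ[↥A] b) * ((1:B) ⊗ₜ[↥A] b) = (1:B) ⊗ₜ[↥A] (b ^ 3) := by
      simp only [Algebra.TensorProduct.tmul_mul_tmul, mul_one, one_mul]
      rw [show b * b = b ^ 2 * 1 by ring, ← move2, show b ^ 2 * b = b ^ 3 * 1 by ring,
        move3, mul_one]
    have e4 : ((1:B) ⊗ₜ[↥A] b) * ((1:B) ⊗ₜ[↥A] b) * ((1:B) ⊗ₜ[↥A] b) = (1:B) ⊗ₜ[↥A] (b ^ 3) := by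
      simp only [Algebra.TensorProduct.tmul_mul_tmul, mul_one, one_mul]
      rw [show b * b * b = b ^ 3 by ring]
    rw [expand, e1, e2, e3, e4]; ring
  have claim1 : ∀ y : B, (1:B) ⊗ₜ[↥A] y - y ⊗ₜ[↥A] (1:B) ∈ Ideal.span {d} := by
    intro y
    have hmemA : ∀ z : B, z ∈ A → (1:B) ⊗ₜ[↥A] z - z ⊗ₜ[↥A] (1:B) ∈ Ideal.span {d} := by
      intro z hz
      have h1 : (⟨z, hz⟩ : ↥A) • (1:B) = z := by rw [Algebra.smul_def]; simp
      have h2 : z ⊗ₜ[↥A] (1:B) = (1:B) ⊗ₜ[↥A] z := by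
        rw [← h1, TensorProduct.smul_tmul, h1]
      rw [h2, sub_self]
      exact Ideal.zero_mem _
    induction hgen y using Algebra.adjoin_induction with
    | mem u hu =>
      rcases hu with rfl | hu
      · have h3 : (1:B) ⊗ₜ[↥A] u - u ⊗ₜ[↥A] (1:B) = -d := by rw [hd]; ring
        rw [h3]
        exact neg_mem (Ideal.subset_span rfl)
      · exact hmemA u hu
    | algebraMap q => exact hmemA _ (A.algebraMap_mem q)
    | add u v _ _ hu hv =>
      have h3 : (1:B) ⊗ₜ[↥A] (u + v) - (u + v) ⊗ₜ[↥A] (1:B)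
          = ((1:B) ⊗ₜ[↥A] u - u ⊗ₜ[↥A] (1:B)) + ((1:B) ⊗ₜ[↥A] v - v ⊗ₜ[↥A] (1:B)) := by
        rw [TensorProduct.tmul_add, TensorProduct.add_tmul]; ring
      rw [h3]; exact Ideal.add_mem _ hu hv
    | mul u v _ _ hu hv =>
      have h3 : (1:B) ⊗ₜ[↥A] (u * v) - (u * v) ⊗ₜ[↥A] (1:B)
          = ((1:B) ⊗ₜ[↥A] u - u ⊗ₜ[↥A] (1:B)) * ((1:B) ⊗ₜ[↥A] v)
            + (u ⊗ₜ[↥A] (1:B)) * ((1:B) ⊗ₜ[↥A] v - v ⊗ₜ[↥A] (1:B)) := by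
        simp only [sub_mul, mul_sub, Algebra.TensorProduct.tmul_mul_tmul, one_mul, mul_one]
        ring
      rw [h3]
      exact Ideal.add_mem _ (Ideal.mul_mem_right _ _ hu) (Ideal.mul_mem_left _ _ hv)
  have claim2 : ∀ z : B ⊗[↥A] B,
      z - (1:B) ⊗ₜ[↥A] (Algebra.TensorProduct.lmul' ↥A z) ∈ Ideal.span {d} := by
    intro z
    induction z using TensorProduct.induction_on with
    | zero => simp
    | tmul u v =>
      rw [Algebra.TensorProduct.lmul'_apply_tmul]
      have key : u ⊗ₜ[↥A] v - (1:B) ⊗ₜ[↥A] (u * v)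
          = (u ⊗ₜ[↥A] (1:B)) * ((1:B) ⊗ₜ[↥A] v - v ⊗ₜ[↥A] (1:B))
            - ((1:B) ⊗ₜ[↥A] (u * v) - (u * v) ⊗ₜ[↥A] (1:B)) := by
        simp only [mul_sub, Algebra.TensorProduct.tmul_mul_tmul, one_mul, mul_one]
        ring
      rw [key]
      exact Ideal.sub_mem _ (Ideal.mul_mem_left _ _ (claim1 v)) (claim1 (u * v))
    | add u v hu hv =>
      have h3 : u + v - (1:B) ⊗ₜ[↥A] (Algebra.TensorProduct.lmul' ↥A (u + v))
          = (u - (1:B) ⊗ₜ[↥A] (Algebra.TensorProduct.lmul' ↥A u))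
            + (v - (1:B) ⊗ₜ[↥A] (Algebra.TensorProduct.lmul' ↥A v)) := by
        rw [map_add, TensorProduct.tmul_add]; ring
      rw [h3]; exact Ideal.add_mem _ hu hv
  have hxI : x ∈ Ideal.span {d} := by
    have h4 := claim2 x
    rwa [hx, TensorProduct.tmul_zero, sub_zero] at h4
  obtain ⟨c, hc⟩ := Ideal.mem_span_singleton'.mp hxI
  exact ⟨3, by rw [← hc, mul_pow, hd3, mul_zero]⟩

/-- Let `A` be a commutative `ℚ`-algebra and `A ⊆ B` an elementary ring extension,
i.e. there is `b ∈ B` with `B = A[b]`, `b ^ 2 ∈ A` and `b ^ 3 ∈ A`. Then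
`Spec B → Spec A` is a universal homeomorphism. -/
theorem stmt_13 {B : Type} [CommRing B] [Algebra ℚ B] (A : Subalgebra ℚ B)
    (b : B) (hb2 : b ^ 2 ∈ A) (hb3 : b ^ 3 ∈ A)
    (hgen : ∀ x : B, x ∈ Algebra.adjoin ℚ (insert b (A : Set B))) :
    IsUniversalHomeomorphism
      (Spec.map (CommRingCat.ofHom (A.val.toRingHom))) := by
  haveI hint : Algebra.IsIntegral ↥A B := by
    constructor
    intro x
    induction hgen x using Algebra.adjoin_induction with
    | mem y hy =>
      rcases hy with rfl | hy
      · refine IsIntegral.of_pow (n := 2) two_pos ?_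
        have h : y ^ 2 = algebraMap ↥A B ⟨y ^ 2, hb2⟩ := rfl
        rw [h]; exact isIntegral_algebraMap
      · have h : y = algebraMap ↥A B ⟨y, hy⟩ := rfl
        rw [h]; exact isIntegral_algebraMap
    | algebraMap q =>
      have h : algebraMap ℚ B q = algebraMap ↥A B ⟨algebraMap ℚ B q, A.algebraMap_mem q⟩ := rfl
      rw [h]; exact isIntegral_algebraMap
    | add x y _ _ hx hy => exact hx.add hy
    | mul x y _ _ hx hy => exact hx.mul hy
  have hφ : CommRingCat.ofHom (A.val.toRingHom) = CommRingCat.ofHom (algebraMap ↥A B) := rfl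
  set f := Spec.map (CommRingCat.ofHom (A.val.toRingHom)) with hf
  haveI h1 : IsIntegralHom f := by
    rw [@HasAffineProperty.iff_of_isAffine _ _ IsIntegralHom.hasAffineProperty]
    refine ⟨inferInstance, ?_⟩
    have hri : (RingHom.toMorphismProperty (RingHom.IsIntegral ·)).RespectsIso :=
      RingHom.toMorphismProperty_respectsIso_iff.mp RingHom.isIntegral_respectsIso
    have : RingHom.toMorphismProperty (RingHom.IsIntegral ·) (CommRingCat.ofHom A.val.toRingHom) := by
      show RingHom.IsIntegral _
      exact fun z => hint.isIntegral z
    exact (MorphismProperty.arrow_mk_iso_iff (RingHom.toMorphismProperty (RingHom.IsIntegral ·))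
      (arrowIsoΓSpecOfIsAffine (CommRingCat.ofHom A.val.toRingHom))).mp this
  haveI h2 : Surjective f := by
    constructor
    intro p
    obtain ⟨P, hPeq, hPprime⟩ : ∃ P : Ideal ↥A, P = p.asIdeal ∧ P.IsPrime :=
      ⟨p.asIdeal, rfl, p.isPrime⟩
    haveI := hPprime
    have hker : Ideal.comap (algebraMap ↥A B) (⊥ : Ideal B) ≤ P := by
      intro z hz
      have hz' : algebraMap ↥A B z = 0 := hz
      have hz0 : z = 0 := Subtype.ext hz'
      rw [hz0]; exact P.zero_mem
    obtain ⟨Q, -, hQprime, hQcomap⟩ :=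
      Ideal.exists_ideal_over_prime_of_isIntegral (R := ↥A) (S := B) P (⊥ : Ideal B) hker
    exact ⟨⟨Q, hQprime⟩, PrimeSpectrum.ext (hQcomap.trans hPeq)⟩
  haveI h3 : UniversallyInjective f := by
    rw [UniversallyInjective.iff_diagonal]
    rw [hf, hφ, diagonal_SpecMap ↥A B]
    haveI : Surjective (Spec.map (CommRingCat.ofHom
        ((Algebra.TensorProduct.lmul' (S := B) ↥A).toRingHom))) := by
      constructor
      intro q
      have hsurj : Function.Surjective (Algebra.TensorProduct.lmul' (S := B) ↥A).toRingHom :=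
        fun y => ⟨y ⊗ₜ 1, by simp [Algebra.TensorProduct.lmul'_apply_tmul]⟩
      have hq : q ∈ Set.range (PrimeSpectrum.comap
          (Algebra.TensorProduct.lmul' (S := B) ↥A).toRingHom) := by
        rw [range_comap_of_surjective _ _ hsurj]; apply (PrimeSpectrum.mem_zeroLocus _ _).mpr
        intro t ht
        obtain ⟨n, hn⟩ := aux_nilpotent_ker A b hb2 hb3 hgen t ht
        exact q.isPrime.mem_of_pow_mem n (hn ▸ q.asIdeal.zero_mem)
      exact hq
    infer_instance
  exact isUniversalHomeomorphism_of_isIntegralHom f
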